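/- Suppose for each i = 1,…,N there exist symmetric positive definite matrices Pᵢ and matrices Wᵢⱼ ≻ 0 (for j in the in-neighborhood Nᵢ) and gains Kᵢᵢ such that (Aᵢᵢ − BᵢKᵢᵢ)ᵀPᵢ + Pᵢ(Aᵢᵢ − BᵢKᵢᵢ) + Pᵢ(Σ_{j∈Nᵢ} Aᵢⱼ Wᵢⱼ⁻¹ Aᵢⱼᵀ)Pᵢ + Σ_{j∈N̂ᵢ} Wⱼᵢ ≺ 0, where N̂ᵢ is the out-neighborhood. Then P = diag(P₁,…,P_N) satisfies (A − BK)ᵀP + P(A − BK) ≺ 0 for the block-structured A (with blocks Aᵢⱼ supported on the graph edges), B = diag(Bᵢ), K = diag(Kᵢᵢ); i.e., the closed-loop matrix admits a block-diagonal Lyapunov function. -/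

import Mathlib

open Matrix

section helpers
variable {p q : Type*} [Fintype p] [Fintype q] [DecidableEq p]

/-- `zᵀ(My) = (Mᵀz)ᵀy`. -/
lemma dot_mulVec_eq {M : Matrix p q ℝ} (z : p → ℝ) (y : q → ℝ) :
    z ⬝ᵥ (M *ᵥ y) = (Mᵀ *ᵥ z) ⬝ᵥ y := by
  rw [dotProduct_mulVec, mulVec_transpose]

omit [DecidableEq p] in
lemma my_sum_mulVec {ι : Type*} (s : Finset ι) (M : ι → Matrix p q ℝ) (v : q → ℝ) :
    (∑ j ∈ s, M j) *ᵥ v = ∑ j ∈ s, M j *ᵥ v := by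
  ext k
  simp only [mulVec, dotProduct, Matrix.sum_apply, Finset.sum_apply, Finset.sum_mul]
  exact Finset.sum_comm

omit [DecidableEq p] in
lemma my_dotProduct_sum {ι : Type*} (s : Finset ι) (u : p → ℝ) (v : ι → p → ℝ) :
    u ⬝ᵥ (∑ j ∈ s, v j) = ∑ j ∈ s, u ⬝ᵥ v j := by
  simp only [dotProduct, Finset.sum_apply, Finset.mul_sum]
  exact Finset.sum_comm

/-- Completing the square: `2 u⬝v ≤ uᵀW⁻¹u + vᵀWv` for `W ≻ 0`. -/
lemma coupling_ineq {W : Matrix p p ℝ} (hW : W.PosDef) (u v : p → ℝ) :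
    2 * (u ⬝ᵥ v) ≤ u ⬝ᵥ W⁻¹ *ᵥ u + v ⬝ᵥ W *ᵥ v := by
  have hWs : Wᵀ = W := hW.isHermitian
  have h1 : W *ᵥ (W⁻¹ *ᵥ u) = u := by
    rw [mulVec_mulVec, mul_nonsing_inv _ (isUnit_iff_isUnit_det _ |>.1 hW.isUnit), one_mulVec]
  have h2 : (W⁻¹ *ᵥ u) ⬝ᵥ (W *ᵥ v) = u ⬝ᵥ v := by
    rw [dot_mulVec_eq, hWs, h1]
  have h3 : (W⁻¹ *ᵥ u) ⬝ᵥ u = u ⬝ᵥ (W⁻¹ *ᵥ u) := dotProduct_comm _ _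
  have key := hW.posSemidef.dotProduct_mulVec_nonneg (v - W⁻¹ *ᵥ u)
  rw [star_trivial] at key
  rw [mulVec_sub, dotProduct_sub, sub_dotProduct, sub_dotProduct, h1, h2, h3,
    dotProduct_comm v u] at key
  linarith

omit [DecidableEq p] in
/-- `2 (Px)⬝(Mx) = xᵀ(MᵀP + PM)x` for symmetric `P`. -/
lemma two_quad {P M : Matrix p p ℝ} (hPs : Pᵀ = P) (x : p → ℝ) :
    2 * ((P *ᵥ x) ⬝ᵥ (M *ᵥ x)) = x ⬝ᵥ (Mᵀ * P + P * M) *ᵥ x := by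
  rw [add_mulVec, dotProduct_add]
  rw [← mulVec_mulVec, dotProduct_mulVec x Mᵀ, vecMul_transpose,
    ← mulVec_mulVec, dotProduct_mulVec x P, ← mulVec_transpose, hPs]
  rw [dotProduct_comm (M *ᵥ x) (P *ᵥ x)]
  ring

end helpers

theorem stmt_17 {N : ℕ} (n m : Fin N → ℕ)
    (E : Finset (Fin N × Fin N))  -- (j, i) ∈ E means subsystem j influences subsystem i
    (A : ∀ i j : Fin N, Matrix (Fin (n i)) (Fin (n j)) ℝ)
    (hA : ∀ i j : Fin N, i ≠ j → (j, i) ∉ E → A i j = 0)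
    (B : ∀ i : Fin N, Matrix (Fin (n i)) (Fin (m i)) ℝ)
    (K : ∀ i : Fin N, Matrix (Fin (m i)) (Fin (n i)) ℝ)
    (P : ∀ i : Fin N, Matrix (Fin (n i)) (Fin (n i)) ℝ)
    (W : ∀ i j : Fin N, Matrix (Fin (n j)) (Fin (n j)) ℝ)
    (hP : ∀ i, (P i).PosDef)
    (hW : ∀ i j : Fin N, (j, i) ∈ E → (W i j).PosDef)
    (hlocal : ∀ i : Fin N,
      (-((A i i - B i * K i)ᵀ * P i + P i * (A i i - B i * K i) +
          P i * (∑ j ∈ Finset.univ.filter (fun j => (j, i) ∈ E),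
                  A i j * (W i j)⁻¹ * (A i j)ᵀ) * P i +
          ∑ j ∈ Finset.univ.filter (fun j => (i, j) ∈ E), W j i)).PosDef)
    (Acl : Matrix (Σ i, Fin (n i)) (Σ i, Fin (n i)) ℝ)
    (hAcl : Acl = (Matrix.of fun p q : Σ i, Fin (n i) => A p.1 q.1 p.2 q.2) -
        Matrix.blockDiagonal' (fun i => B i * K i)) :
    (-(Aclᵀ * Matrix.blockDiagonal' P + Matrix.blockDiagonal' P * Acl)).PosDef := by
  set Q := Matrix.blockDiagonal' P with hQdef
  have hPs : ∀ i, (P i)ᵀ = P i := fun i =>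
    (conjTranspose_eq_transpose_of_trivial (P i)) ▸ (hP i).isHermitian
  have hQs : Qᵀ = Q := by
    rw [hQdef, blockDiagonal'_transpose]
    exact congrArg _ (funext hPs)
  refine posDef_iff_dotProduct_mulVec.mpr ⟨?_, ?_⟩
  · -- Hermitian
    show (-(Aclᵀ * Q + Q * Acl))ᴴ = _
    rw [conjTranspose_eq_transpose_of_trivial, transpose_neg, transpose_add, transpose_mul,
      transpose_mul, transpose_transpose, hQs, add_comm]
  · intro x hx
    rw [star_trivial]
    -- block components of x
    set xb : ∀ i, Fin (n i) → ℝ := fun i k => x ⟨i, k⟩ with hxbdef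
    -- dot products over the sigma type split blockwise
    have hsig : ∀ y z : (Σ i, Fin (n i)) → ℝ,
        y ⬝ᵥ z = ∑ i, (fun k => y ⟨i, k⟩) ⬝ᵥ (fun k => z ⟨i, k⟩) := by
      intro y z
      rw [dotProduct, ← Finset.univ_sigma_univ, Finset.sum_sigma]
      rfl
    have hQx : ∀ pp : Σ i, Fin (n i), (Q *ᵥ x) pp = (P pp.1 *ᵥ xb pp.1) pp.2 := by
      rintro ⟨i, k⟩
      show ∑ q : Σ i, Fin (n i), Q ⟨i, k⟩ q * x q = _
      rw [← Finset.univ_sigma_univ, Finset.sum_sigma]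
      rw [Finset.sum_eq_single i (fun j _ hj => ?_) (by simp)]
      · simp [hQdef, mulVec, dotProduct, xb]
      · apply Finset.sum_eq_zero
        intro l _
        rw [hQdef, blockDiagonal'_apply_ne _ _ _ (Ne.symm hj), zero_mul]
    have hAx : ∀ pp : Σ i, Fin (n i),
        (Acl *ᵥ x) pp = (∑ j, A pp.1 j *ᵥ xb j) pp.2 - ((B pp.1 * K pp.1) *ᵥ xb pp.1) pp.2 := by
      rintro ⟨i, k⟩
      rw [hAcl, sub_mulVec]
      have h1 : ((Matrix.of fun p q : Σ i, Fin (n i) => A p.1 q.1 p.2 q.2) *ᵥ x) ⟨i, k⟩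
          = (∑ j, A i j *ᵥ xb j) k := by
        show ∑ q : Σ i, Fin (n i), A i q.1 k q.2 * x q = _
        rw [← Finset.univ_sigma_univ, Finset.sum_sigma, Finset.sum_apply]
        rfl
      have h2 : (Matrix.blockDiagonal' (fun i => B i * K i) *ᵥ x) ⟨i, k⟩
          = ((B i * K i) *ᵥ xb i) k := by
        show ∑ q : Σ i, Fin (n i), Matrix.blockDiagonal' (fun i => B i * K i) ⟨i, k⟩ q * x q = _
        rw [← Finset.univ_sigma_univ, Finset.sum_sigma]
        rw [Finset.sum_eq_single i (fun j _ hj => ?_) (by simp)]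
        · simp [mulVec, dotProduct, xb]
        · apply Finset.sum_eq_zero
          intro l _
          rw [blockDiagonal'_apply_ne _ _ _ (Ne.symm hj), zero_mul]
      show ((Matrix.of fun p q : Σ i, Fin (n i) => A p.1 q.1 p.2 q.2) *ᵥ x) ⟨i, k⟩
        - (Matrix.blockDiagonal' (fun i => B i * K i) *ᵥ x) ⟨i, k⟩ = _
      rw [h1, h2]
    -- the quadratic form equals -2c
    have hval : x ⬝ᵥ (-(Aclᵀ * Q + Q * Acl)) *ᵥ x
        = -(2 * ((Q *ᵥ x) ⬝ᵥ (Acl *ᵥ x))) := by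
      rw [neg_mulVec, dotProduct_neg, add_mulVec, dotProduct_add]
      rw [← mulVec_mulVec, dot_mulVec_eq (M := Aclᵀ) x (Q *ᵥ x), transpose_transpose]
      rw [← mulVec_mulVec x Q Acl, dot_mulVec_eq (M := Q) x (Acl *ᵥ x), hQs]
      rw [dotProduct_comm (Acl *ᵥ x) (Q *ᵥ x)]
      ring
    -- blockwise expansion of c
    set f : Fin N → Fin N → ℝ := fun i j => (P i *ᵥ xb i) ⬝ᵥ (A i j *ᵥ xb j) with hfdef
    set g : Fin N → ℝ := fun i => (P i *ᵥ xb i) ⬝ᵥ ((B i * K i) *ᵥ xb i) with hgdef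
    have hc : (Q *ᵥ x) ⬝ᵥ (Acl *ᵥ x)
        = ∑ i, ((∑ j, f i j) - g i) := by
      rw [hsig]
      refine Finset.sum_congr rfl fun i _ => ?_
      have e1 : (fun k => (Q *ᵥ x) ⟨i, k⟩) = P i *ᵥ xb i := funext fun k => hQx ⟨i, k⟩
      have e2 : (fun k => (Acl *ᵥ x) ⟨i, k⟩)
          = (∑ j, A i j *ᵥ xb j) - (B i * K i) *ᵥ xb i := funext fun k => hAx ⟨i, k⟩
      rw [e1, e2, dotProduct_sub, my_dotProduct_sum]
    -- restrict the cross terms to actual in-neighbours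
    have hrow : ∀ i, (∑ j, f i j)
        = f i i + ∑ j ∈ (Finset.univ.filter (fun j => (j, i) ∈ E)).erase i, f i j := by
      intro i
      rw [← Finset.add_sum_erase _ (f i) (Finset.mem_univ i)]
      congr 1
      rw [← Finset.filter_erase]
      refine (Finset.sum_filter_of_ne fun j hj hfj => ?_).symm
      by_contra hE
      apply hfj
      rw [hfdef]
      simp only
      rw [hA i j (Finset.ne_of_mem_erase hj).symm hE, zero_mulVec, dotProduct_zero]
    -- coupling vectors and the two quadratic remainder terms
    set u : ∀ i j : Fin N, Fin (n j) → ℝ := fun i j => (A i j)ᵀ *ᵥ (P i *ᵥ xb i) with hudef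
    set α : Fin N → Fin N → ℝ := fun i j => u i j ⬝ᵥ (W i j)⁻¹ *ᵥ u i j with hαdef
    set β : Fin N → Fin N → ℝ := fun i j => xb j ⬝ᵥ W i j *ᵥ xb j with hβdef
    -- key estimate : 2 c ≤ ∑ i, xᵢᵀ Mᵢ xᵢ
    have hcross : ∀ i, ∀ j ∈ (Finset.univ.filter (fun j => (j, i) ∈ E)).erase i,
        2 * f i j ≤ α i j + β i j := by
      intro i j hj
      have hjE : (j, i) ∈ E := (Finset.mem_filter.1 (Finset.mem_of_mem_erase hj)).2
      have : f i j = u i j ⬝ᵥ xb j := dot_mulVec_eq _ _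
      rw [this]
      exact coupling_ineq (hW i j hjE) _ _
    have hαnonneg : ∀ i j, (j, i) ∈ E → 0 ≤ α i j := by
      intro i j hj
      have := ((hW i j hj).inv).posSemidef.dotProduct_mulVec_nonneg (u i j)
      rwa [star_trivial] at this
    have hβnonneg : ∀ i j, (j, i) ∈ E → 0 ≤ β i j := by
      intro i j hj
      have := (hW i j hj).posSemidef.dotProduct_mulVec_nonneg (xb j)
      rwa [star_trivial] at this
    -- sums over full in-neighbourhoods
    have hstep1 : ∀ i, ∑ j ∈ (Finset.univ.filter (fun j => (j, i) ∈ E)).erase i, 2 * f i j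
        ≤ ∑ j ∈ Finset.univ.filter (fun j => (j, i) ∈ E), (α i j + β i j) := by
      intro i
      refine le_trans (Finset.sum_le_sum (hcross i)) ?_
      refine Finset.sum_le_sum_of_subset_of_nonneg (Finset.erase_subset _ _) ?_
      intro j hj _
      have hjE : (j, i) ∈ E := (Finset.mem_filter.1 hj).2
      exact add_nonneg (hαnonneg i j hjE) (hβnonneg i j hjE)
    -- α-sum equals the P S P quadratic form
    have hα : ∀ i, ∑ j ∈ Finset.univ.filter (fun j => (j, i) ∈ E), α i j
        = xb i ⬝ᵥ (P i * (∑ j ∈ Finset.univ.filter (fun j => (j, i) ∈ E),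
            A i j * (W i j)⁻¹ * (A i j)ᵀ) * P i) *ᵥ xb i := by
      intro i
      rw [← mulVec_mulVec, ← mulVec_mulVec, dot_mulVec_eq (M := P i), hPs i,
        my_sum_mulVec, my_dotProduct_sum]
      refine Finset.sum_congr rfl fun j _ => ?_
      rw [hαdef]
      simp only
      rw [← mulVec_mulVec, ← mulVec_mulVec, dot_mulVec_eq (M := A i j), hudef]
    -- β-sum: swap the double sum
    have hβswap : ∑ i, ∑ j ∈ Finset.univ.filter (fun j => (j, i) ∈ E), β i j
        = ∑ i, xb i ⬝ᵥ (∑ j ∈ Finset.univ.filter (fun j => (i, j) ∈ E), W j i) *ᵥ xb i := by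
      have h1 : ∀ i : Fin N, ∑ j ∈ Finset.univ.filter (fun j => (j, i) ∈ E), β i j
          = ∑ j : Fin N, if (j, i) ∈ E then β i j else 0 := fun i =>
        Finset.sum_filter _ _
      have h2 : ∀ i : Fin N, xb i ⬝ᵥ (∑ j ∈ Finset.univ.filter (fun j => (i, j) ∈ E), W j i) *ᵥ xb i
          = ∑ j : Fin N, if (i, j) ∈ E then β j i else 0 := by
        intro i
        rw [my_sum_mulVec, my_dotProduct_sum, Finset.sum_filter]
      simp only [h1, h2]
      exact Finset.sum_comm
    -- assemble
    have hM : ∀ i, 2 * (f i i - g i)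
        = xb i ⬝ᵥ ((A i i - B i * K i)ᵀ * P i + P i * (A i i - B i * K i)) *ᵥ xb i := by
      intro i
      have : f i i - g i = (P i *ᵥ xb i) ⬝ᵥ ((A i i - B i * K i) *ᵥ xb i) := by
        rw [hfdef, hgdef]
        simp only
        rw [sub_mulVec, dotProduct_sub]
      rw [this, two_quad (hPs i)]
    -- full per-block matrix
    set Mi : ∀ i : Fin N, Matrix (Fin (n i)) (Fin (n i)) ℝ := fun i =>
      (A i i - B i * K i)ᵀ * P i + P i * (A i i - B i * K i) +
        P i * (∑ j ∈ Finset.univ.filter (fun j => (j, i) ∈ E),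
                A i j * (W i j)⁻¹ * (A i j)ᵀ) * P i +
        ∑ j ∈ Finset.univ.filter (fun j => (i, j) ∈ E), W j i with hMidef
    have hsplit : ∀ i, xb i ⬝ᵥ Mi i *ᵥ xb i
        = xb i ⬝ᵥ ((A i i - B i * K i)ᵀ * P i + P i * (A i i - B i * K i)) *ᵥ xb i +
          xb i ⬝ᵥ (P i * (∑ j ∈ Finset.univ.filter (fun j => (j, i) ∈ E),
                A i j * (W i j)⁻¹ * (A i j)ᵀ) * P i) *ᵥ xb i +
          xb i ⬝ᵥ (∑ j ∈ Finset.univ.filter (fun j => (i, j) ∈ E), W j i) *ᵥ xb i := by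
      intro i
      rw [hMidef]
      simp only [add_mulVec, dotProduct_add]
    -- the key estimate
    have hkey : 2 * ((Q *ᵥ x) ⬝ᵥ (Acl *ᵥ x)) ≤ ∑ i, xb i ⬝ᵥ Mi i *ᵥ xb i := by
      rw [hc]
      calc 2 * (∑ i, ((∑ j, f i j) - g i))
          = ∑ i, (2 * (f i i - g i) +
              ∑ j ∈ (Finset.univ.filter (fun j => (j, i) ∈ E)).erase i, 2 * f i j) := by
            rw [Finset.mul_sum]
            refine Finset.sum_congr rfl fun i _ => ?_
            rw [hrow i, mul_sub, mul_add, Finset.mul_sum]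
            ring
        _ ≤ ∑ i, (2 * (f i i - g i) +
              ∑ j ∈ Finset.univ.filter (fun j => (j, i) ∈ E), (α i j + β i j)) :=
            Finset.sum_le_sum fun i _ => add_le_add_right (hstep1 i) _
        _ = (∑ i, (2 * (f i i - g i) +
              ∑ j ∈ Finset.univ.filter (fun j => (j, i) ∈ E), α i j)) +
            ∑ i, ∑ j ∈ Finset.univ.filter (fun j => (j, i) ∈ E), β i j := by
            rw [← Finset.sum_add_distrib]
            refine Finset.sum_congr rfl fun i _ => ?_
            rw [Finset.sum_add_distrib]
            ring
        _ = ∑ i, xb i ⬝ᵥ Mi i *ᵥ xb i := by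
            rw [hβswap, ← Finset.sum_add_distrib]
            refine Finset.sum_congr rfl fun i _ => ?_
            rw [hsplit i, hM i, hα i]
    -- strict positivity of the negated sum
    obtain ⟨pp, hpp⟩ := Function.ne_iff.1 hx
    have hxb0 : xb pp.1 ≠ 0 := by
      intro h
      apply hpp
      have : xb pp.1 pp.2 = 0 := by rw [h]; rfl
      rwa [hxbdef] at this
    have hnonneg : ∀ i, 0 ≤ -(xb i ⬝ᵥ Mi i *ᵥ xb i) := by
      intro i
      have := (hlocal i).posSemidef.dotProduct_mulVec_nonneg (xb i)
      rw [star_trivial, neg_mulVec, dotProduct_neg] at this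
      exact this
    have hipos : 0 < -(xb pp.1 ⬝ᵥ Mi pp.1 *ᵥ xb pp.1) := by
      have := (hlocal pp.1).dotProduct_mulVec_pos hxb0
      rw [star_trivial, neg_mulVec, dotProduct_neg] at this
      exact this
    have hsumneg : ∑ i, xb i ⬝ᵥ Mi i *ᵥ xb i < 0 := by
      have : 0 < ∑ i, -(xb i ⬝ᵥ Mi i *ᵥ xb i) :=
        Finset.sum_pos' (fun i _ => hnonneg i) ⟨pp.1, Finset.mem_univ _, hipos⟩
      rw [Finset.sum_neg_distrib] at this
      linarith
    rw [hval]
    linarith
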